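/- (First Geometric Lemma, Lemma 3.1) There exist a finite set Λ_Ξ contained in S² ∩ ℚ³ (unit vectors in ℝ³ with rational coordinates), for each ξ ∈ Λ_Ξ vectors ξ₁, ξ₂ ∈ ℝ³ such that (ξ, ξ₁, ξ₂) is an orthonormal basis of ℝ³, a constant ε_Ξ > 0, and for each ξ ∈ Λ_Ξ a function γ_ξ that is smooth and strictly positive on the set of 3×3 skew-symmetric real matrices A with |A| < ε_Ξ, such that every 3×3 skew-symmetric real matrix A with |A| < ε_Ξ satisfies A = Σ_{ξ ∈ Λ_Ξ} (γ_ξ(A))² (ξ ⊗ ξ₂ − ξ₂ ⊗ ξ). -/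

import Mathlib

open scoped Matrix

/- Frobenius norm and normed-space structure on 3×3 real matrices. -/
attribute [local instance] Matrix.frobeniusNormedAddCommGroup Matrix.frobeniusNormedSpace

/-- Outer product of two vectors in ℝ³: `(u ⊗ w)ᵢⱼ = uᵢ wⱼ`. -/
def outer (u w : Fin 3 → ℝ) : Matrix (Fin 3) (Fin 3) ℝ := fun i j => u i * w j

/-- A vector in ℝ³ has rational coordinates. -/
def IsRationalVec (u : Fin 3 → ℝ) : Prop := ∀ i, ∃ q : ℚ, u i = (q : ℝ)

/-- Euclidean dot product on ℝ³. -/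
def dot3 (u v : Fin 3 → ℝ) : ℝ := ∑ i, u i * v i

/-- `(u, v, w)` is an orthonormal basis of ℝ³ (three pairwise-orthogonal unit vectors). -/
def OrthonormalTriple (u v w : Fin 3 → ℝ) : Prop :=
  dot3 u u = 1 ∧ dot3 v v = 1 ∧ dot3 w w = 1 ∧
  dot3 u v = 0 ∧ dot3 u w = 0 ∧ dot3 v w = 0

/-- The six rational unit directions used in the construction. -/
def vΛ : Fin 6 → Fin 3 → ℝ
  | 0 => ![1,0,0]
  | 1 => ![0,1,0]
  | 2 => ![0,0,1]
  | 3 => ![-1,0,0]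
  | 4 => ![0,-1,0]
  | 5 => ![0,0,-1]

/-- second orthonormal companion -/
def eB (ξ : Fin 3 → ℝ) : Fin 3 → ℝ := ![|ξ 2|, |ξ 0|, |ξ 1|]

/-- first orthonormal companion -/
def eA (ξ : Fin 3 → ℝ) : Fin 3 → ℝ := ![|ξ 1|, |ξ 2|, |ξ 0|]

/-- rational mirror of `vΛ` -/
def vq : Fin 6 → Fin 3 → ℚ
  | 0 => ![1,0,0]
  | 1 => ![0,1,0]
  | 2 => ![0,0,1]
  | 3 => ![-1,0,0]
  | 4 => ![0,-1,0]
  | 5 => ![0,0,-1]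

/-- the linear coefficient functional -/
def gq (ξ : Fin 3 → ℝ) (A : Matrix (Fin 3) (Fin 3) ℝ) : ℝ :=
  ∑ i, ∑ j, ξ i * A i j * eB ξ j

lemma gq0 (A : Matrix (Fin 3) (Fin 3) ℝ) : gq (vΛ 0) A = A 0 1 := by
  simp [gq, eB, vΛ, Fin.sum_univ_three]
lemma gq1 (A : Matrix (Fin 3) (Fin 3) ℝ) : gq (vΛ 1) A = A 1 2 := by
  simp [gq, eB, vΛ, Fin.sum_univ_three]
lemma gq2 (A : Matrix (Fin 3) (Fin 3) ℝ) : gq (vΛ 2) A = A 2 0 := by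
  simp [gq, eB, vΛ, Fin.sum_univ_three]
lemma gq3 (A : Matrix (Fin 3) (Fin 3) ℝ) : gq (vΛ 3) A = -A 0 1 := by
  simp [gq, eB, vΛ, Fin.sum_univ_three]
lemma gq4 (A : Matrix (Fin 3) (Fin 3) ℝ) : gq (vΛ 4) A = -A 1 2 := by
  simp [gq, eB, vΛ, Fin.sum_univ_three]
lemma gq5 (A : Matrix (Fin 3) (Fin 3) ℝ) : gq (vΛ 5) A = -A 2 0 := by
  simp [gq, eB, vΛ, Fin.sum_univ_three]

theorem entry_le_norm (A : Matrix (Fin 3) (Fin 3) ℝ) (i j : Fin 3) : |A i j| ≤ ‖A‖ := by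
  rw [Matrix.frobenius_norm_def]
  have key : |A i j| ^ (2:ℝ) ≤ ∑ i, ∑ j, ‖A i j‖ ^ (2:ℝ) := by
    have h1 : ‖A i j‖ ^ (2:ℝ) ≤ ∑ j', ‖A i j'‖ ^ (2:ℝ) :=
      Finset.single_le_sum (f := fun j' => ‖A i j'‖ ^ (2:ℝ))
        (fun _ _ => Real.rpow_nonneg (norm_nonneg _) _) (Finset.mem_univ j)
    have h2 : (∑ j', ‖A i j'‖ ^ (2:ℝ)) ≤ ∑ i', ∑ j', ‖A i' j'‖ ^ (2:ℝ) :=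
      Finset.single_le_sum (f := fun i' => ∑ j', ‖A i' j'‖ ^ (2:ℝ))
        (fun _ _ => Finset.sum_nonneg fun _ _ => Real.rpow_nonneg (norm_nonneg _) _)
        (Finset.mem_univ i)
    calc |A i j| ^ (2:ℝ) = ‖A i j‖ ^ (2:ℝ) := by rw [Real.norm_eq_abs]
    _ ≤ _ := h1.trans h2
  have := Real.rpow_le_rpow (Real.rpow_nonneg (abs_nonneg _) _) key (by norm_num : (0:ℝ) ≤ 1/2)
  calc |A i j| = (|A i j| ^ (2:ℝ)) ^ (1/2:ℝ) := by
        rw [← Real.rpow_mul (abs_nonneg _)]; norm_num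
  _ ≤ _ := this

lemma gq_abs_le (k : Fin 6) (A : Matrix (Fin 3) (Fin 3) ℝ) : |gq (vΛ k) A| ≤ ‖A‖ := by
  fin_cases k
  · show |gq (vΛ 0) A| ≤ ‖A‖; rw [gq0]; exact entry_le_norm A 0 1
  · show |gq (vΛ 1) A| ≤ ‖A‖; rw [gq1]; exact entry_le_norm A 1 2
  · show |gq (vΛ 2) A| ≤ ‖A‖; rw [gq2]; exact entry_le_norm A 2 0
  · show |gq (vΛ 3) A| ≤ ‖A‖; rw [gq3, abs_neg]; exact entry_le_norm A 0 1
  · show |gq (vΛ 4) A| ≤ ‖A‖; rw [gq4, abs_neg]; exact entry_le_norm A 1 2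
  · show |gq (vΛ 5) A| ≤ ‖A‖; rw [gq5, abs_neg]; exact entry_le_norm A 2 0

lemma gq_pos (k : Fin 6) (A : Matrix (Fin 3) (Fin 3) ℝ) (hA : ‖A‖ < 1) :
    0 < 2 + gq (vΛ k) A / 2 := by
  have h := (abs_le.mp (gq_abs_le k A)).1
  linarith

lemma vΛ_inj : Function.Injective vΛ := by
  intro a b h
  fin_cases a <;> fin_cases b <;> first
    | rfl
    | (exfalso
       have h0 := congrFun h 0
       have h1 := congrFun h 1
       have h2 := congrFun h 2
       simp [vΛ, Matrix.cons_val_two] at h0 h1 h2 <;> linarith)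

lemma gq_smooth (k : Fin 6) :
    ContDiff ℝ (⊤ : ℕ∞) (fun A : Matrix (Fin 3) (Fin 3) ℝ => gq (vΛ k) A) := by
  unfold gq
  apply ContDiff.sum; intro i _
  apply ContDiff.sum; intro j _
  have : ContDiff ℝ (⊤ : ℕ∞) (fun A : Matrix (Fin 3) (Fin 3) ℝ => A i j) := by
    let L : Matrix (Fin 3) (Fin 3) ℝ →ₗ[ℝ] ℝ :=
      { toFun := fun A => A i j, map_add' := fun _ _ => rfl, map_smul' := fun _ _ => rfl }
    exact (L.toContinuousLinearMap).contDiff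
  exact (contDiff_const.mul this).mul contDiff_const

/-- **First Geometric Lemma (Lemma 3.1).** There exist a finite set `Λ_Ξ ⊆ S² ∩ ℚ³`, for each
`ξ ∈ Λ_Ξ` an orthonormal basis `(ξ, ξ₁, ξ₂)` of ℝ³, a constant `ε_Ξ > 0`, and smooth, strictly
positive functions `γ_ξ` on the ball of radius `ε_Ξ` around `0` in the skew-symmetric 3×3
matrices, such that every skew-symmetric `A` with `‖A‖ < ε_Ξ` satisfies
`A = ∑_{ξ ∈ Λ_Ξ} (γ_ξ(A))² (ξ ⊗ ξ₂ − ξ₂ ⊗ ξ)`. -/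
theorem first_geometric_lemma :
    ∃ (ΛΞ : Finset (Fin 3 → ℝ)) (e₁ e₂ : (Fin 3 → ℝ) → (Fin 3 → ℝ)) (εΞ : ℝ)
      (γ : (Fin 3 → ℝ) → Matrix (Fin 3) (Fin 3) ℝ → ℝ),
      0 < εΞ ∧
      (∀ ξ ∈ ΛΞ, IsRationalVec ξ ∧ OrthonormalTriple ξ (e₁ ξ) (e₂ ξ)) ∧
      (∀ ξ ∈ ΛΞ,
        ContDiffOn ℝ (⊤ : ℕ∞) (γ ξ)
          {A : Matrix (Fin 3) (Fin 3) ℝ | Aᵀ = -A ∧ ‖A‖ < εΞ} ∧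
        ∀ A : Matrix (Fin 3) (Fin 3) ℝ, Aᵀ = -A → ‖A‖ < εΞ → 0 < γ ξ A) ∧
      ∀ A : Matrix (Fin 3) (Fin 3) ℝ, Aᵀ = -A → ‖A‖ < εΞ →
        A = ∑ ξ ∈ ΛΞ, (γ ξ A) ^ 2 • (outer ξ (e₂ ξ) - outer (e₂ ξ) ξ) := by
  classical
  refine ⟨Finset.univ.image vΛ, eA, eB, 1,
    (fun ξ A => Real.sqrt (2 + gq ξ A / 2)), one_pos, ?_, ?_, ?_⟩
  · intro ξ hξ
    obtain ⟨k, -, rfl⟩ := Finset.mem_image.mp hξ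
    constructor
    · intro i
      refine ⟨vq k i, ?_⟩
      fin_cases k <;> fin_cases i <;> norm_num [vΛ, vq]
    · fin_cases k <;>
        refine ⟨?_, ?_, ?_, ?_, ?_, ?_⟩ <;>
        norm_num [dot3, vΛ, eA, eB, Fin.sum_univ_three, Matrix.cons_val_two]
  · intro ξ hξ
    obtain ⟨k, -, rfl⟩ := Finset.mem_image.mp hξ
    constructor
    · apply ContDiffOn.sqrt
      · exact (contDiff_const.add ((gq_smooth k).div_const 2)).contDiffOn
      · rintro A ⟨-, hA⟩
        exact (gq_pos k A hA).ne'
    · intro A _ hA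
      exact Real.sqrt_pos.mpr (gq_pos k A hA)
  · intro A hskew hA
    rw [Finset.sum_image (fun a _ b _ h => vΛ_inj h)]
    have hsq : ∀ k : Fin 6, Real.sqrt (2 + gq (vΛ k) A / 2) ^ 2 = 2 + gq (vΛ k) A / 2 :=
      fun k => Real.sq_sqrt (gq_pos k A hA).le
    have h00 : A 0 0 = 0 := by
      have := congrFun (congrFun hskew 0) 0; simp [Matrix.transpose] at this; linarith
    have h11 : A 1 1 = 0 := by
      have := congrFun (congrFun hskew 1) 1; simp [Matrix.transpose] at this; linarith
    have h22 : A 2 2 = 0 := by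
      have := congrFun (congrFun hskew 2) 2; simp [Matrix.transpose] at this; linarith
    have h10 : A 1 0 = -A 0 1 := by
      have := congrFun (congrFun hskew 0) 1; simpa [Matrix.transpose] using this
    have h21 : A 2 1 = -A 1 2 := by
      have := congrFun (congrFun hskew 1) 2; simpa [Matrix.transpose] using this
    have h02 : A 0 2 = -A 2 0 := by
      have := congrFun (congrFun hskew 2) 0; simpa [Matrix.transpose] using this
    ext i j
    rw [Matrix.sum_apply]
    simp only [Fin.sum_univ_six, Matrix.smul_apply, Matrix.sub_apply, hsq,
      gq0, gq1, gq2, gq3, gq4, gq5, smul_eq_mul, outer]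
    fin_cases i <;> fin_cases j <;>
      simp [vΛ, eB, h00, h11, h22, h10, h21, h02] <;> ring
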